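/- Projective Baumslag Lemma, hyperbolic case over ℂ: let k ≥ 1, let m₁, …, m_k be nonzero integers, and let g₁, …, g_k ∈ SL(2,ℂ) be matrices all four of whose entries are nonzero (equivalently, each gᵢ moves the fixed-point set {0, ∞} of the diagonal subgroup off itself under the Möbius action). For z ∈ ℂ ∖ {0} let D(z) ∈ SL(2,ℂ) be the diagonal matrix with diagonal entries z and z⁻¹, and set f(z) = g₁·D(z)^{m₁}·g₂·D(z)^{m₂}·⋯·g_k·D(z)^{m_k}. Then: (1) for every x ∈ ℂ the set {z ∈ ℂ ∖ {0} : (tr f(z))² = x} is finite; and (2) |tr f(z)| → ∞ along the cocompact filter of ℂ ∖ {0}, i.e. for every R > 0 there exist ε > 0 and K > 0 such that |tr f(z)| > R whenever |z| ≥ K or 0 < |z| ≤ ε. -/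

import Mathlib

noncomputable instance : TopologicalSpace (Matrix.SpecialLinearGroup (Fin 2) ℂ) :=
  inferInstanceAs (TopologicalSpace {A : Matrix (Fin 2) (Fin 2) ℂ // A.det = 1})

/-- The diagonal matrix `D(z) = diag(z, z⁻¹) ∈ SL(2,ℂ)`, for `z ∈ ℂˣ = ℂ ∖ {0}`. -/
noncomputable def diagSL (z : ℂˣ) : Matrix.SpecialLinearGroup (Fin 2) ℂ :=
  ⟨!![(z : ℂ), 0; 0, ((z⁻¹ : ℂˣ) : ℂ)], by
    rw [Matrix.det_fin_two_of]
    simp⟩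

open Polynomial Matrix

abbrev SL2' := Matrix.SpecialLinearGroup (Fin 2) ℂ

noncomputable def diagHom : ℂˣ →* SL2' where
  toFun := diagSL
  map_one' := by
    apply Subtype.ext
    ext i j
    fin_cases i <;> fin_cases j <;> simp [diagSL]
  map_mul' := fun x y => by
    apply Subtype.ext
    show (diagSL (x*y) : Matrix (Fin 2) (Fin 2) ℂ) = (diagSL x : Matrix (Fin 2) (Fin 2) ℂ) * diagSL y
    simp [diagSL, Matrix.mul_fin_two, mul_comm]

lemma diagSL_zpow_coe (z : ℂˣ) (n : ℤ) :
    ((diagSL z ^ n : SL2') : Matrix (Fin 2) (Fin 2) ℂ) = !![(z:ℂ)^n, 0; 0, (z:ℂ)^(-n)] := by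
  have h : diagSL z ^ n = diagSL (z ^ n) := (map_zpow diagHom z n).symm
  rw [h]
  show (diagSL (z^n) : Matrix (Fin 2) (Fin 2) ℂ) = _
  simp [diagSL, Units.val_zpow_eq_zpow_val, _root_.zpow_neg]

lemma diagSL_zpow_inv (z : ℂˣ) (n : ℤ) : diagSL z ^ n = diagSL z⁻¹ ^ (-n) := by
  have h : diagSL z⁻¹ = (diagSL z)⁻¹ := map_inv diagHom z
  rw [h, _root_.inv_zpow, ← _root_.zpow_neg, neg_neg]

/-- exponent of column `b` in `z^{|m|} * (g * D(z)^m)`. -/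
def ecol (mm : ℤ) (b : Fin 2) : ℕ := ((mm.natAbs : ℤ) + (if b = 0 then mm else -mm)).toNat

lemma ecol_cast (mm : ℤ) (b : Fin 2) :
    (ecol mm b : ℤ) = (mm.natAbs : ℤ) + (if b = 0 then mm else -mm) := by
  unfold ecol
  rcases Fin.exists_fin_two.mp ⟨b, rfl⟩ with h | h <;> subst h <;> omega

lemma zpow_aux (z : ℂ) (hz : z ≠ 0) (A B : ℕ) (c : ℤ) (h : (A:ℤ) + c = B) :
    z ^ A * z ^ c = z ^ B := by
  rw [← zpow_natCast z A, ← zpow_natCast z B, ← zpow_add₀ hz, h]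

lemma entry_eval (g : SL2') (z : ℂˣ) (mm : ℤ) (a b : Fin 2) :
    (z:ℂ) ^ (mm.natAbs) * ((g * diagSL z ^ mm : SL2') : Matrix (Fin 2) (Fin 2) ℂ) a b
      = (g : Matrix (Fin 2) (Fin 2) ℂ) a b * (z:ℂ) ^ (ecol mm b) := by
  have hz : (z:ℂ) ≠ 0 := z.ne_zero
  rw [Matrix.SpecialLinearGroup.coe_mul, diagSL_zpow_coe, Matrix.mul_apply, Fin.sum_univ_two]
  rcases Fin.exists_fin_two.mp ⟨b, rfl⟩ with h | h <;> subst h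
  · have h1 : (z:ℂ) ^ (mm.natAbs) * (z:ℂ) ^ mm = (z:ℂ) ^ (ecol mm 0) :=
      zpow_aux _ hz _ _ _ (by rw [ecol_cast]; norm_num)
    simp only [Matrix.of_apply, Matrix.cons_val_zero, Matrix.cons_val_one, Matrix.head_cons, Matrix.cons_val', Matrix.empty_val', Matrix.cons_val_fin_one, Matrix.head_fin_const, mul_zero, add_zero, zero_mul]
    linear_combination ((g : Matrix (Fin 2) (Fin 2) ℂ) a 0) * h1
  · have h1 : (z:ℂ) ^ (mm.natAbs) * (z:ℂ) ^ (-mm) = (z:ℂ) ^ (ecol mm 1) :=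
      zpow_aux _ hz _ _ _ (by rw [ecol_cast]; norm_num)
    simp only [Matrix.of_apply, Matrix.cons_val_zero, Matrix.cons_val_one, Matrix.head_cons, Matrix.cons_val', Matrix.empty_val', Matrix.cons_val_fin_one, Matrix.head_fin_const, mul_zero, zero_add, zero_mul]
    linear_combination ((g : Matrix (Fin 2) (Fin 2) ℂ) a 1) * h1

lemma add_aux {p q : Polynomial ℂ} (hp : p ≠ 0) (hq : q ≠ 0) (h : p.natDegree ≠ q.natDegree) :
    p + q ≠ 0 ∧ (p + q).natDegree = max p.natDegree q.natDegree := by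
  constructor
  · intro h0
    have hq' : q = -p := by linear_combination h0
    apply h
    rw [hq', natDegree_neg]
  · rcases h.lt_or_gt with hlt | hlt
    · rw [natDegree_add_eq_right_of_natDegree_lt hlt, max_eq_right hlt.le]
    · rw [natDegree_add_eq_left_of_natDegree_lt hlt, max_eq_left hlt.le]

noncomputable def Fw (l : List (ℤ × SL2')) (z : ℂˣ) : SL2' :=
  (l.map fun p => p.2 * diagSL z ^ p.1).prod

def Nw (l : List (ℤ × SL2')) : ℕ := (l.map fun p => p.1.natAbs).sum

lemma core (l : List (ℤ × SL2')) (hne : l ≠ [])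
    (hm : ∀ p ∈ l, p.1 ≠ 0)
    (hg : ∀ p ∈ l, ∀ a b : Fin 2, (p.2 : Matrix (Fin 2) (Fin 2) ℂ) a b ≠ 0) :
    ∃ (P : Matrix (Fin 2) (Fin 2) (Polynomial ℂ)) (D : Fin 2 → ℕ),
      (∀ (z : ℂˣ) (a b : Fin 2),
        (P a b).eval (z:ℂ) = (z:ℂ) ^ (Nw l) * ((Fw l z : SL2') : Matrix (Fin 2) (Fin 2) ℂ) a b) ∧
      (∀ a b, P a b ≠ 0 ∧ (P a b).natDegree = D b) ∧ D 0 ≠ D 1 ∧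
      max (D 0) (D 1) = 2 * Nw l := by
  induction l using List.reverseRecOn with
  | nil => exact absurd rfl hne
  | append_singleton l p ih =>
    obtain ⟨mm, gg⟩ := p
    have hmm : mm ≠ 0 := hm (mm, gg) (by simp)
    have hgg : ∀ a b : Fin 2, (gg : Matrix (Fin 2) (Fin 2) ℂ) a b ≠ 0 :=
      hg (mm, gg) (by simp)
    have hec0 : (ecol mm 0 : ℤ) = (mm.natAbs : ℤ) + mm := by rw [ecol_cast]; norm_num
    have hec1 : (ecol mm 1 : ℤ) = (mm.natAbs : ℤ) - mm := by rw [ecol_cast]; norm_num; ring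
    rcases eq_or_ne l [] with rfl | hl
    · -- base case: single letter
      refine ⟨fun a b => C ((gg : Matrix (Fin 2) (Fin 2) ℂ) a b) * X ^ (ecol mm b),
        fun b => ecol mm b, ?_, ?_, ?_, ?_⟩
      · intro z a b
        have := entry_eval gg z mm a b
        simp only [Fw, Nw, List.nil_append, List.map_cons, List.map_nil, List.prod_cons,
          List.prod_nil, mul_one, List.sum_cons, List.sum_nil, add_zero]
        rw [eval_mul, eval_C, eval_pow, eval_X, ← this]
      · intro a b
        refine ⟨mul_ne_zero (C_ne_zero.mpr (hgg a b)) (pow_ne_zero _ X_ne_zero), ?_⟩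
        rw [natDegree_C_mul_X_pow _ _ (hgg a b)]
      · show ecol mm 0 ≠ ecol mm 1
        omega
      · show max (ecol mm 0) (ecol mm 1) = 2 * Nw ([] ++ [(mm, gg)])
        simp only [Nw, List.nil_append, List.map_cons, List.map_nil, List.sum_cons,
          List.sum_nil, add_zero]
        omega
    · obtain ⟨P, D, hev, hPD, hD01, hmax⟩ := ih hl
        (fun q hq => hm q (List.mem_append_left _ hq))
        (fun q hq => hg q (List.mem_append_left _ hq))
      have hNnew : Nw (l ++ [(mm, gg)]) = Nw l + mm.natAbs := by
        simp [Nw]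
      refine ⟨fun a b => (P a 0 * C ((gg : Matrix (Fin 2) (Fin 2) ℂ) 0 b)
          + P a 1 * C ((gg : Matrix (Fin 2) (Fin 2) ℂ) 1 b)) * X ^ (ecol mm b),
        fun b => max (D 0) (D 1) + ecol mm b, ?_, ?_, ?_, ?_⟩
      · intro z a b
        have hz : (z:ℂ) ≠ 0 := z.ne_zero
        have hF : Fw (l ++ [(mm, gg)]) z = Fw l z * (gg * diagSL z ^ mm) := by
          simp [Fw]
        have e0 := entry_eval gg z mm 0 b
        have e1 := entry_eval gg z mm 1 b
        have q0 := hev z a 0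
        have q1 := hev z a 1
        rw [hF, hNnew, Matrix.SpecialLinearGroup.coe_mul, Matrix.mul_apply, Fin.sum_univ_two,
          eval_mul, eval_add, eval_mul, eval_mul, eval_C, eval_C, eval_pow, eval_X, q0, q1,
          pow_add]
        linear_combination
          (-((z:ℂ) ^ (Nw l) * ((Fw l z : SL2') : Matrix (Fin 2) (Fin 2) ℂ) a 0)) * e0
          + (-((z:ℂ) ^ (Nw l) * ((Fw l z : SL2') : Matrix (Fin 2) (Fin 2) ℂ) a 1)) * e1
      · intro a b
        have h0 : P a 0 * C ((gg : Matrix (Fin 2) (Fin 2) ℂ) 0 b) ≠ 0 :=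
          mul_ne_zero (hPD a 0).1 (C_ne_zero.mpr (hgg 0 b))
        have h1 : P a 1 * C ((gg : Matrix (Fin 2) (Fin 2) ℂ) 1 b) ≠ 0 :=
          mul_ne_zero (hPD a 1).1 (C_ne_zero.mpr (hgg 1 b))
        have hd0 : (P a 0 * C ((gg : Matrix (Fin 2) (Fin 2) ℂ) 0 b)).natDegree = D 0 := by
          rw [natDegree_mul (hPD a 0).1 (C_ne_zero.mpr (hgg 0 b)), natDegree_C, add_zero,
            (hPD a 0).2]
        have hd1 : (P a 1 * C ((gg : Matrix (Fin 2) (Fin 2) ℂ) 1 b)).natDegree = D 1 := by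
          rw [natDegree_mul (hPD a 1).1 (C_ne_zero.mpr (hgg 1 b)), natDegree_C, add_zero,
            (hPD a 1).2]
        obtain ⟨hS, hSdeg⟩ := add_aux h0 h1 (by rw [hd0, hd1]; exact hD01)
        refine ⟨mul_ne_zero hS (pow_ne_zero _ X_ne_zero), ?_⟩
        rw [natDegree_mul hS (pow_ne_zero _ X_ne_zero), natDegree_X_pow, hSdeg, hd0, hd1]
      · show max (D 0) (D 1) + ecol mm 0 ≠ max (D 0) (D 1) + ecol mm 1
        omega
      · show max (max (D 0) (D 1) + ecol mm 0) (max (D 0) (D 1) + ecol mm 1)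
          = 2 * Nw (l ++ [(mm, gg)])
        rw [hNnew]
        omega

lemma key {k : ℕ} (hk : 1 ≤ k) (m : Fin k → ℤ) (hm : ∀ i, m i ≠ 0)
    (g : Fin k → SL2') (hg : ∀ i, ∀ a b : Fin 2, (g i : Matrix (Fin 2) (Fin 2) ℂ) a b ≠ 0)
    (N : ℕ) (hN : N = Nw (List.ofFn fun i => (m i, g i))) :
    ∃ P : Polynomial ℂ, P ≠ 0 ∧ P.natDegree = 2 * N ∧ ∀ z : ℂˣ,
      P.eval (z:ℂ) = (z:ℂ)^N *
        (((List.ofFn fun i => g i * diagSL z ^ m i).prod : SL2') :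
          Matrix (Fin 2) (Fin 2) ℂ).trace := by
  have hne : (List.ofFn fun i => (m i, g i)) ≠ [] := by
    intro h
    have := congrArg List.length h
    simp at this
    omega
  obtain ⟨P, D, hev, hPD, hD01, hmax⟩ := core _ hne
    (fun p hp => by
      obtain ⟨i, rfl⟩ := List.mem_ofFn.1 hp
      exact hm i)
    (fun p hp => by
      obtain ⟨i, rfl⟩ := List.mem_ofFn.1 hp
      exact hg i)
  obtain ⟨hne0, hdeg⟩ := add_aux (hPD 0 0).1 (hPD 1 1).1
    (by rw [(hPD 0 0).2, (hPD 1 1).2]; exact hD01)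
  refine ⟨P 0 0 + P 1 1, hne0, ?_, ?_⟩
  · rw [(hPD 0 0).2, (hPD 1 1).2] at hdeg
    rw [hdeg, hmax, hN]
  · intro z
    have hFw : Fw (List.ofFn fun i => (m i, g i)) z
        = (List.ofFn fun i => g i * diagSL z ^ m i).prod := by
      simp [Fw, List.map_ofFn]
      rfl
    rw [eval_add, hev z 0 0, hev z 1 1, hFw, hN, Matrix.trace_fin_two]
    ring

lemma bound (P : Polynomial ℂ) (N : ℕ) (hN : 1 ≤ N) (hdeg : P.natDegree = 2*N) (hP : P ≠ 0)
    (R : ℝ) (hR : 0 < R) :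
    ∃ K > (0:ℝ), ∀ z : ℂ, K ≤ ‖z‖ →
      R * (‖z‖)^N < ‖P.eval z‖ := by
  set a := P.leadingCoeff with haa
  have ha : 0 < ‖a‖ := by
    rw [norm_pos_iff]
    exact leadingCoeff_ne_zero.mpr hP
  set Cs := ∑ i ∈ Finset.range (2*N), ‖P.coeff i‖ with hCs
  have hCs0 : 0 ≤ Cs := Finset.sum_nonneg fun _ _ => norm_nonneg _
  refine ⟨max 1 ((R + Cs + 1)/ ‖a‖), lt_of_lt_of_le one_pos (le_max_left _ _), ?_⟩
  intro z hz
  set Z := ‖z‖ with hZ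
  have hZ1 : 1 ≤ Z := le_trans (le_max_left _ _) hz
  have hZ0 : 0 < Z := lt_of_lt_of_le one_pos hZ1
  have haZ : R + Cs + 1 ≤ ‖a‖ * Z := by
    have h := le_trans (le_max_right _ _) hz
    rw [div_le_iff₀ ha] at h
    linarith [h]
  have hev : P.eval z = (∑ i ∈ Finset.range (2*N), P.coeff i * z^i) + a * z^(2*N) := by
    have h1 : P.eval z = ∑ i ∈ Finset.range (2*N+1), P.coeff i * z^i := by
      rw [eval_eq_sum_range, hdeg]
    rw [h1, Finset.sum_range_succ]
    congr 1
    rw [haa, ← hdeg, coeff_natDegree]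
  have hsum : ‖∑ i ∈ Finset.range (2*N), P.coeff i * z^i‖ ≤ Cs * Z^(2*N-1) := by
    refine le_trans (norm_sum_le _ _) ?_
    rw [hCs, Finset.sum_mul]
    refine Finset.sum_le_sum fun i hi => ?_
    rw [norm_mul, norm_pow]
    refine mul_le_mul_of_nonneg_left ?_ (norm_nonneg _)
    refine pow_le_pow_right₀ hZ1 ?_
    have := Finset.mem_range.1 hi
    omega
  have hineq : ‖a‖ * Z^(2*N) ≤ ‖P.eval z‖ + Cs * Z^(2*N-1) := by
    have h3 : ‖a * z^(2*N)‖
        ≤ ‖P.eval z‖ + ‖∑ i ∈ Finset.range (2*N), P.coeff i * z^i‖ := by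
      have h4 : a * z^(2*N) = P.eval z - ∑ i ∈ Finset.range (2*N), P.coeff i * z^i := by
        rw [hev]; ring
      rw [h4, sub_eq_add_neg]
      refine le_trans (norm_add_le _ _) ?_
      rw [norm_neg]
    rw [norm_mul, norm_pow] at h3
    linarith [hsum]
  have h2N : Z^(2*N) = Z^(2*N-1) * Z := by
    rw [← pow_succ]
    congr 1
    omega
  have hZN : Z^N ≤ Z^(2*N-1) := pow_le_pow_right₀ hZ1 (by omega)
  have hZNpos : 0 < Z^N := pow_pos hZ0 _
  have hpow : 0 < Z^(2*N-1) := pow_pos hZ0 _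
  calc R * Z^N < (R+1) * Z^N := by nlinarith
    _ ≤ (R+1) * Z^(2*N-1) := by nlinarith
    _ ≤ (‖a‖ * Z - Cs) * Z^(2*N-1) := by
        have h5 : R + 1 ≤ ‖a‖ * Z - Cs := by linarith
        exact mul_le_mul_of_nonneg_right h5 hpow.le
    _ = ‖a‖ * Z^(2*N) - Cs * Z^(2*N-1) := by rw [h2N]; ring
    _ ≤ ‖P.eval z‖ := by linarith [hineq]

/-- **Projective Baumslag Lemma, hyperbolic case over `ℂ`.**  Let `m₁, …, m_k` be nonzero
integers and `g₁, …, g_k ∈ SL(2,ℂ)` matrices all of whose entries are nonzero.  Setting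
`f(z) = g₁ D(z)^{m₁} g₂ D(z)^{m₂} ⋯ g_k D(z)^{m_k}`, we have:
(1) for every `x ∈ ℂ` the set `{z : (tr f(z))² = x}` is finite, and
(2) `|tr f(z)| → ∞` as `|z| → ∞` or `|z| → 0`. -/
theorem projective_baumslag_hyperbolic (k : ℕ) (hk : 1 ≤ k)
    (m : Fin k → ℤ) (hm : ∀ i : Fin k, m i ≠ 0)
    (g : Fin k → Matrix.SpecialLinearGroup (Fin 2) ℂ)
    (hg : ∀ i : Fin k, ∀ a b : Fin 2, (g i : Matrix (Fin 2) (Fin 2) ℂ) a b ≠ 0) :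
    (∀ x : ℂ,
      {z : ℂˣ |
        (((List.ofFn fun i : Fin k => g i * (diagSL z) ^ (m i)).prod :
            Matrix (Fin 2) (Fin 2) ℂ).trace) ^ 2 = x}.Finite) ∧
    (∀ R : ℝ, 0 < R → ∃ ε > (0 : ℝ), ∃ K > (0 : ℝ), ∀ z : ℂˣ,
      (K ≤ ‖(z : ℂ)‖ ∨ ‖(z : ℂ)‖ ≤ ε) →
      R < ‖((List.ofFn fun i : Fin k => g i * (diagSL z) ^ (m i)).prod :
            Matrix (Fin 2) (Fin 2) ℂ).trace‖) := by
  set N := Nw (List.ofFn fun i => (m i, g i)) with hNdef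
  have hN1 : 1 ≤ N := by
    have h1 : N = ∑ i : Fin k, (m i).natAbs := by
      rw [hNdef]
      simp [Nw, List.map_ofFn, Function.comp, List.sum_ofFn]
    rw [h1]
    calc 1 ≤ (m ⟨0, hk⟩).natAbs := by
          have := hm ⟨0, hk⟩
          omega
      _ ≤ ∑ i : Fin k, (m i).natAbs :=
          Finset.single_le_sum (f := fun i : Fin k => (m i).natAbs)
            (fun i _ => Nat.zero_le _) (Finset.mem_univ _)
  obtain ⟨P, hP0, hPdeg, hPev⟩ := key hk m hm g hg N rfl
  have hN' : N = Nw (List.ofFn fun i => (-(m i), g i)) := by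
    rw [hNdef]
    simp only [Nw, List.map_ofFn]
    congr 2
    funext i
    simp [Int.natAbs_neg]
  obtain ⟨Q, hQ0, hQdeg, hQev⟩ := key hk (fun i => -(m i)) (fun i => neg_ne_zero.mpr (hm i))
    g hg N hN'
  have tinv : ∀ z : ℂˣ,
      (List.ofFn fun i => g i * diagSL z ^ m i).prod
        = (List.ofFn fun i => g i * diagSL z⁻¹ ^ (-(m i))).prod := by
    intro z
    congr 1
    exact congrArg List.ofFn (funext fun i => by rw [diagSL_zpow_inv])
  constructor
  · intro x
    set QQ : Polynomial ℂ := P^2 - C x * X^(2*N) with hQQdef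
    have hQQ : QQ ≠ 0 := by
      intro h
      have h2 : P^2 = C x * X^(2*N) := by
        rw [hQQdef] at h
        linear_combination h
      have d1 : (P^2).natDegree = 4*N := by
        rw [natDegree_pow, hPdeg]; ring
      have d2 : (C x * X^(2*N) : Polynomial ℂ).natDegree ≤ 2*N :=
        le_trans natDegree_mul_le (by simp)
      rw [h2] at d1
      omega
    refine Set.Finite.subset
      ((Polynomial.finite_setOf_isRoot hQQ).preimage (Units.val_injective.injOn)) ?_
    intro z hz
    simp only [Set.mem_setOf_eq] at hz
    simp only [Set.mem_preimage, Set.mem_setOf_eq, IsRoot.def]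
    have he := hPev z
    have hzz : ((z:ℂ))^(2*N) = (((z:ℂ))^N)^2 := by
      rw [← pow_mul, Nat.mul_comm]
    rw [hQQdef, eval_sub, eval_mul, eval_pow, eval_pow, eval_C, eval_X, he, hzz]
    linear_combination (((z:ℂ))^N)^2 * hz
  · intro R hR
    obtain ⟨K₁, hK₁, hb₁⟩ := bound P N hN1 hPdeg hP0 R hR
    obtain ⟨K₂, hK₂, hb₂⟩ := bound Q N hN1 hQdeg hQ0 R hR
    refine ⟨K₂⁻¹, inv_pos.mpr hK₂, K₁, hK₁, ?_⟩
    intro z hcase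
    have habs0 : 0 < ‖(z:ℂ)‖ := norm_pos_iff.mpr z.ne_zero
    rcases hcase with hbig | hsmall
    · have h := hb₁ (z:ℂ) hbig
      have he : ‖P.eval (z:ℂ)‖
          = (‖(z:ℂ)‖)^N * ‖((List.ofFn fun i : Fin k => g i * (diagSL z) ^ (m i)).prod :
              Matrix (Fin 2) (Fin 2) ℂ).trace‖ := by
        rw [hPev z, norm_mul, norm_pow]
      rw [he] at h
      have hpow : 0 < (‖(z:ℂ)‖)^N := pow_pos habs0 _
      calc R = R * 1 := by ring
        _ ≤ R * 1 := le_refl _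
        _ < _ := by
          rw [mul_one]
          exact lt_of_mul_lt_mul_left (by rw [mul_comm R] at h; exact h) hpow.le
    · set w := z⁻¹ with hw
      have hwabs : ‖(w:ℂ)‖ = (‖(z:ℂ)‖)⁻¹ := by
        rw [hw, Units.val_inv_eq_inv_val, norm_inv]
      have hKw : K₂ ≤ ‖(w:ℂ)‖ := by
        rw [hwabs]
        have := inv_anti₀ habs0 hsmall
        rwa [inv_inv] at this
      have h := hb₂ (w:ℂ) hKw
      have htr : (((List.ofFn fun i : Fin k => g i * (diagSL z) ^ (m i)).prod :
            Matrix (Fin 2) (Fin 2) ℂ).trace)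
          = (((List.ofFn fun i : Fin k => g i * (diagSL w) ^ (-(m i))).prod :
            Matrix (Fin 2) (Fin 2) ℂ).trace) := by
        rw [tinv z]
      have he : ‖Q.eval ((w:ℂ))‖
          = (‖(w:ℂ)‖)^N * ‖((List.ofFn fun i : Fin k => g i * (diagSL z) ^ (m i)).prod :
              Matrix (Fin 2) (Fin 2) ℂ).trace‖ := by
        rw [hQev w, norm_mul, norm_pow, htr]
      rw [he] at h
      have hpow : 0 < (‖(w:ℂ)‖)^N := pow_pos (norm_pos_iff.mpr w.ne_zero) _
      have := lt_of_mul_lt_mul_left (by rw [mul_comm R] at h; exact h) hpow.le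
      exact this
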